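/- Given any instance Nim−F of CIS-Nim and any m > n > 4·F_max + 3·|F|, there exists a bijection φ from S_n to S_m such that whenever φ(x1,y1) = (x2,y2), one has x1 − y1 ≥ x2 − y2 and x1 − 2y1 ≥ x2 − 2y2. -/

import Mathlib

open Filter

/-- A move in Nim: strictly decrease one heap. -/
def NimMove (a b : Multiset ℕ) : Prop :=
  ∃ x y, x ∈ a ∧ y < x ∧ b = y ::ₘ a.erase x

theorem NimMove.sum_lt {a b : Multiset ℕ} (h : NimMove a b) : b.sum < a.sum := by
  obtain ⟨x, y, hx, hyx, rfl⟩ := h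
  have hc : x ::ₘ a.erase x = a := Multiset.cons_erase hx
  have h1 : (y ::ₘ a.erase x).sum = y + (a.erase x).sum := Multiset.sum_cons y _
  have h2 : a.sum = x + (a.erase x).sum := by
    conv_lhs => rw [← hc]
    exact Multiset.sum_cons x _
  omega

/-- P-positions of Nim minus a forbidden finite set `F`, by the standard recursion:
a position is P iff every child not in `F` is an N-position. -/
def NimP (F : Finset (Multiset ℕ)) (a : Multiset ℕ) : Prop :=
  ∀ b, NimMove a b → b ∉ F → ¬ NimP F b
termination_by a.sum
decreasing_by exact NimMove.sum_lt (by assumption)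

/-- A P-position of Nim−F : a valid position (not forbidden) which is P. -/
def PPos (F : Finset (Multiset ℕ)) (a : Multiset ℕ) : Prop :=
  a ∉ F ∧ NimP F a

/-- Largest heap size appearing in any forbidden position. -/
def Fmax (F : Finset (Multiset ℕ)) : ℕ := F.sup Multiset.sup

/-- The set S of pairs (x,y) such that there is z with z < y < x and {x,y,z} a P-position. -/
def Sset (F : Finset (Multiset ℕ)) : Set (ℕ × ℕ) :=
  {p | ∃ z, z < p.2 ∧ p.2 < p.1 ∧ PPos F {p.1, p.2, z}}

/-- r(x,y): number of elements of S of the form (x',y) with x' ≥ x. -/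
noncomputable def rdef (F : Finset (Multiset ℕ)) (x y : ℕ) : ℕ :=
  {x' | x ≤ x' ∧ (x', y) ∈ Sset F}.ncard

/-- b(x,y): number of elements of S of the form (x,y') with y' ≤ y. -/
noncomputable def bdef (F : Finset (Multiset ℕ)) (x y : ℕ) : ℕ :=
  {y' | y' ≤ y ∧ (x, y') ∈ Sset F}.ncard

/-- U_{x,y} = A ∪ B ∪ C ∪ D. -/
def Uset (F : Finset (Multiset ℕ)) (x y : ℕ) : Set (ℕ × ℕ) :=
  {p | (p.2 < p.1 ∧ p.1 ≤ x ∧ bdef F p.1 p.1 ≥ p.1 - p.2) ∨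
       (p.1 = x ∧ p.2 < y ∧ bdef F x (y - 1) ≥ y - p.2) ∨
       (y ≤ p.2 ∧ p.2 < x ∧ x ≤ p.1 ∧ rdef F x p.2 > p.1 - x) ∨
       (p.2 < y ∧ y ≤ x ∧ x < p.1 ∧ rdef F (x + 1) p.2 > p.1 - (x + 1))}

/-- Ū_{x,y}: agrees with U_{x,y} for second coordinate < x, and for y' ≥ x contains
(x',y') iff y' < x' ≤ 2y' and (y', ⌊x'/2⌋) ∉ Ū_{x,y}. -/
def Ubar (F : Finset (Multiset ℕ)) (x y : ℕ) (p : ℕ × ℕ) : Prop :=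
  if p.2 < x then p ∈ Uset F x y
  else if h : p.2 < p.1 then p.1 ≤ 2 * p.2 ∧ ¬ Ubar F x y (p.2, p.1 / 2)
  else False
termination_by p.1
decreasing_by exact h

/-- S_n = Ū_{n,0}. -/
def Sn (F : Finset (Multiset ℕ)) (n : ℕ) : Set (ℕ × ℕ) := {p | Ubar F n 0 p}

/-- R_n = {(x,y) : y < n ≤ x ≤ 2y}. -/
def Rn (n : ℕ) : Set (ℕ × ℕ) := {p | p.2 < n ∧ n ≤ p.1 ∧ p.1 ≤ 2 * p.2}

/-- h(m,n) = |R_n ∩ S_m|. -/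
noncomputable def hdef (F : Finset (Multiset ℕ)) (m n : ℕ) : ℕ := (Rn n ∩ Sn F m).ncard

/-- π(n): number of P-positions (unordered multisets) with all entries < n. -/
noncomputable def piNim (F : Finset (Multiset ℕ)) (n : ℕ) : ℕ :=
  {s : Multiset ℕ | s.card = 3 ∧ (∀ a ∈ s, a < n) ∧ PPos F s}.ncard

namespace CIS

lemma nimP_iff {F : Finset (Multiset ℕ)} {a : Multiset ℕ} :
    NimP F a ↔ ∀ b, NimMove a b → b ∉ F → ¬ NimP F b := by
  rw [NimP]

lemma no_move_between {F : Finset (Multiset ℕ)} {a b : Multiset ℕ}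
    (ha : PPos F a) (hb : PPos F b) (h : NimMove a b) : False :=
  (nimP_iff.mp ha.2 b h hb.1) hb.2

lemma ms_swap12 (a b c : ℕ) : ({a, b, c} : Multiset ℕ) = {b, a, c} :=
  Multiset.cons_swap a b {c}

lemma ms_swap23 (a b c : ℕ) : ({a, b, c} : Multiset ℕ) = {a, c, b} :=
  congrArg (a ::ₘ ·) (Multiset.cons_swap b c 0)

lemma ms_rot (a b c : ℕ) : ({a, b, c} : Multiset ℕ) = {c, a, b} := by
  rw [ms_swap23, ms_swap12]

lemma erase_fst (x y z : ℕ) : ({x, y, z} : Multiset ℕ).erase x = {y, z} :=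
  Multiset.erase_cons_head x _

lemma erase_snd (x y z : ℕ) : ({x, y, z} : Multiset ℕ).erase y = {x, z} := by
  rw [ms_swap12]; exact Multiset.erase_cons_head y _

lemma erase_thd (x y z : ℕ) : ({x, y, z} : Multiset ℕ).erase z = {x, y} := by
  rw [ms_rot]; exact Multiset.erase_cons_head z _

lemma nimMove_fst {x y z x' : ℕ} (h : x' < x) : NimMove {x, y, z} {x', y, z} :=
  ⟨x, x', Multiset.mem_cons_self _ _, h, by rw [erase_fst]; rfl⟩

lemma nimMove_snd {x y z y' : ℕ} (h : y' < y) : NimMove {x, y, z} {x, y', z} := by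
  refine ⟨y, y', ?_, h, ?_⟩
  · rw [ms_swap12]; exact Multiset.mem_cons_self _ _
  · rw [erase_snd, ms_swap12]; rfl

lemma nimMove_thd {x y z z' : ℕ} (h : z' < z) : NimMove {x, y, z} {x, y, z'} := by
  refine ⟨z, z', ?_, h, ?_⟩
  · rw [ms_rot]; exact Multiset.mem_cons_self _ _
  · rw [erase_thd, ms_rot]; rfl

/-- characterize targets of a move from a triple -/
lemma move_cases {x y z : ℕ} {b : Multiset ℕ} (h : NimMove {x, y, z} b) :
    (∃ v < x, b = {v, y, z}) ∨ (∃ v < y, b = {x, v, z}) ∨ (∃ v < z, b = {x, y, v}) := by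
  obtain ⟨e, v, he, hv, rfl⟩ := h
  rcases Multiset.mem_cons.1 he with rfl | he2
  · exact Or.inl ⟨v, hv, by rw [erase_fst]; rfl⟩
  rcases Multiset.mem_cons.1 he2 with rfl | he3
  · refine Or.inr (Or.inl ⟨v, hv, ?_⟩)
    rw [erase_snd, ms_swap12 x v z]; rfl
  · have : e = z := by simpa using he3
    subst this
    refine Or.inr (Or.inr ⟨v, hv, ?_⟩)
    rw [erase_thd, ms_rot x y v]; rfl

/-- at most one PPos on each "line" {·, u, v} -/
lemma line_unique {F : Finset (Multiset ℕ)} {u v w₁ w₂ : ℕ}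
    (h1 : PPos F {w₁, u, v}) (h2 : PPos F {w₂, u, v}) (hlt : w₁ < w₂) : False :=
  no_move_between h2 h1 (nimMove_fst hlt)

lemma mem_F_le {F : Finset (Multiset ℕ)} {s : Multiset ℕ} {a : ℕ}
    (hs : s ∈ F) (ha : a ∈ s) : a ≤ Fmax F :=
  le_trans (Multiset.le_sup ha) (Finset.le_sup hs)

end CIS
namespace CIS

lemma tri_sum (a b c : ℕ) : ({a, b, c} : Multiset ℕ).sum = a + b + c := by
  simp [Multiset.insert_eq_cons]; ring

lemma ppos_top_le {F : Finset (Multiset ℕ)} {x y z : ℕ} (h : PPos F {x, y, z}) :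
    x ≤ y + z + F.card ∧ (Fmax F < y → x ≤ y + z) := by
  classical
  set SFin : Finset ℕ := (Finset.range x).filter (fun s => ({s, y, z} : Multiset ℕ) ∈ F) with hSFin
  have hSF : SFin.card ≤ F.card := by
    apply Finset.card_le_card_of_injOn (fun s => ({s, y, z} : Multiset ℕ))
    · intro s hs
      exact (Finset.mem_filter.1 hs).2
    · intro s1 _ s2 _ heq
      have := congrArg Multiset.sum heq
      rw [tri_sum, tri_sum] at this
      omega
  set Rest : Finset ℕ := Finset.range x \ SFin with hRest
  -- witness statement
  have hwit : ∀ s ∈ Rest, ∃ t : ℕ ⊕ ℕ,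
      (∃ v, t = Sum.inl v ∧ v < y ∧ PPos F {s, v, z}) ∨
      (∃ v, t = Sum.inr v ∧ v < z ∧ PPos F {s, y, v}) := by
    intro s hs
    have hsx : s < x := Finset.mem_range.1 (Finset.mem_sdiff.1 hs).1
    have hsF : ({s, y, z} : Multiset ℕ) ∉ F := by
      intro hmem
      exact (Finset.mem_sdiff.1 hs).2 (Finset.mem_filter.2 ⟨Finset.mem_range.2 hsx, hmem⟩)
    have hnot : ¬ NimP F {s, y, z} := nimP_iff.mp h.2 _ (nimMove_fst hsx) hsF
    rw [nimP_iff] at hnot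
    push_neg at hnot
    obtain ⟨b, hmv, hbF, hbP⟩ := hnot
    have hbPP : PPos F b := ⟨hbF, hbP⟩
    rcases move_cases hmv with ⟨v, hv, rfl⟩ | ⟨v, hv, rfl⟩ | ⟨v, hv, rfl⟩
    · exact absurd (line_unique hbPP h (lt_trans hv hsx)) (fun f => f)
    · exact ⟨Sum.inl v, Or.inl ⟨v, rfl, hv, hbPP⟩⟩
    · exact ⟨Sum.inr v, Or.inr ⟨v, rfl, hv, hbPP⟩⟩
  have hw : ∀ s : ℕ, ∃ t : ℕ ⊕ ℕ, s ∈ Rest →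
      ((∃ v, t = Sum.inl v ∧ v < y ∧ PPos F {s, v, z}) ∨
       (∃ v, t = Sum.inr v ∧ v < z ∧ PPos F {s, y, v})) := by
    intro s
    by_cases hs : s ∈ Rest
    · obtain ⟨t, ht⟩ := hwit s hs
      exact ⟨t, fun _ => ht⟩
    · exact ⟨Sum.inl 0, fun hc => absurd hc hs⟩
  choose g hg using hw
  have hinj : Set.InjOn g Rest := by
    intro s1 hs1 s2 hs2 heq
    rcases hg s1 hs1 with ⟨v, hv1, hvy, hP1⟩ | ⟨v, hv1, hvz, hP1⟩ <;>
      rcases hg s2 hs2 with ⟨v2, hv2, hvy2, hP2⟩ | ⟨v2, hv2, hvz2, hP2⟩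
    · rw [hv1, hv2] at heq
      cases heq
      rcases lt_trichotomy s1 s2 with hl | he | hl
      · exact absurd (line_unique hP1 hP2 hl) (fun f => f)
      · exact he
      · exact absurd (line_unique hP2 hP1 hl) (fun f => f)
    · rw [hv1, hv2] at heq; cases heq
    · rw [hv1, hv2] at heq; cases heq
    · rw [hv1, hv2] at heq
      cases heq
      rcases lt_trichotomy s1 s2 with hl | he | hl
      · exact absurd (line_unique hP1 hP2 hl) (fun f => f)
      · exact he
      · exact absurd (line_unique hP2 hP1 hl) (fun f => f)
  have hmaps : ∀ s ∈ Rest, g s ∈ ((Finset.range y).image (Sum.inl : ℕ → ℕ ⊕ ℕ) ∪ (Finset.range z).image (Sum.inr : ℕ → ℕ ⊕ ℕ)) := by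
    intro s hs
    rcases hg s hs with ⟨v, hv1, hvy, _⟩ | ⟨v, hv1, hvz, _⟩
    · exact Finset.mem_union_left _ (Finset.mem_image.2 ⟨v, Finset.mem_range.2 hvy, hv1.symm⟩)
    · exact Finset.mem_union_right _ (Finset.mem_image.2 ⟨v, Finset.mem_range.2 hvz, hv1.symm⟩)
  have hcard1 : Rest.card ≤ y + z := by
    have := Finset.card_le_card_of_injOn g hmaps hinj
    calc Rest.card ≤ _ := this
      _ ≤ ((Finset.range y).image (Sum.inl : ℕ → ℕ ⊕ ℕ)).card + ((Finset.range z).image (Sum.inr : ℕ → ℕ ⊕ ℕ)).card :=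
          Finset.card_union_le _ _
      _ ≤ y + z := by
          have h1 : ((Finset.range y).image (Sum.inl : ℕ → ℕ ⊕ ℕ)).card ≤ y := by
            simpa using Finset.card_image_le (s := Finset.range y) (f := (Sum.inl : ℕ → ℕ ⊕ ℕ))
          have h2 : ((Finset.range z).image (Sum.inr : ℕ → ℕ ⊕ ℕ)).card ≤ z := by
            simpa using Finset.card_image_le (s := Finset.range z) (f := (Sum.inr : ℕ → ℕ ⊕ ℕ))
          omega
  have hsplit : Rest.card + SFin.card = x := by
    rw [hRest]
    rw [Finset.card_sdiff_add_card_eq_card (Finset.filter_subset _ _)]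
    exact Finset.card_range x
  constructor
  · omega
  · intro hFy
    have hSF0 : SFin.card = 0 := by
      rw [Finset.card_eq_zero, hSFin, Finset.filter_eq_empty_iff]
      intro s _ hmem
      have : y ≤ Fmax F := mem_F_le hmem (by
        rw [ms_swap12]
        exact Multiset.mem_cons_self _ _)
      omega
    omega

end CIS
namespace CIS

lemma Sset_bound {F : Finset (Multiset ℕ)} {x y : ℕ} (h : (x, y) ∈ Sset F) :
    y < x ∧ (x < 2 * y ∨ x ≤ 2 * Fmax F + F.card) := by
  obtain ⟨z, hz, hyx, hP⟩ := h
  have hc := ppos_top_le hP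
  by_cases hy : Fmax F < y
  · have := hc.2 hy
    exact ⟨hyx, Or.inl (by omega)⟩
  · have h1 := hc.1
    exact ⟨hyx, Or.inr (by omega)⟩

lemma col_unique {F : Finset (Multiset ℕ)} {x y1 y2 c : ℕ}
    (h1 : PPos F {x, y1, c}) (h2 : PPos F {x, y2, c}) (hlt : y1 < y2) : False :=
  no_move_between h2 h1 (nimMove_snd hlt)

lemma bdef_self_le (F : Finset (Multiset ℕ)) (x : ℕ) : 2 * bdef F x x ≤ x := by
  classical
  have hfin : {y' | y' ≤ x ∧ (x, y') ∈ Sset F}.Finite :=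
    (Set.finite_Iic x).subset (fun y' hy' => hy'.1)
  have hb : bdef F x x = hfin.toFinset.card := by
    rw [bdef]
    exact Set.ncard_eq_toFinset_card _ hfin
  set Tf := hfin.toFinset with hTf
  have hmemT : ∀ y' ∈ Tf, y' ≤ x ∧ (x, y') ∈ Sset F := by
    intro y' hy'
    rwa [hTf, Set.Finite.mem_toFinset] at hy'
  have hwex : ∀ y' : ℕ, ∃ z, y' ∈ Tf → (z < y' ∧ PPos F {x, y', z}) := by
    intro y'
    by_cases hy' : y' ∈ Tf
    · obtain ⟨z, hz, _, hP⟩ := (hmemT y' hy').2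
      exact ⟨z, fun _ => ⟨hz, hP⟩⟩
    · exact ⟨0, fun hc => absurd hc hy'⟩
  choose w hw using hwex
  have hTlt : ∀ y' ∈ Tf, y' < x := fun y' hy' => (Sset_bound (hmemT y' hy').2).1
  have hinj : Set.InjOn w Tf := by
    intro y1 h1 y2 h2 heq
    rcases lt_trichotomy y1 y2 with hl | he | hl
    · exact absurd (col_unique ((hw y1 h1).2) (heq ▸ (hw y2 h2).2) hl) (fun f => f)
    · exact he
    · exact absurd (col_unique ((hw y2 h2).2) (heq.symm ▸ (hw y1 h1).2) hl) (fun f => f)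
  have hdisj : Disjoint Tf (Tf.image w) := by
    rw [Finset.disjoint_right]
    intro y1 hy1im hy1
    obtain ⟨y2, hy2, hw2⟩ := Finset.mem_image.1 hy1im
    have hw2lt : w y2 < y2 := (hw y2 hy2).1
    rcases lt_trichotomy y1 y2 with hl | he | hl
    · -- PPos {x, y2, y1} and PPos {x, y1, w y1} : move y2 → w y1
      have hP2 : PPos F {x, y2, y1} := hw2 ▸ (hw y2 hy2).2
      have hP1 : PPos F {x, y1, w y1} := (hw y1 hy1).2
      have hmv : NimMove {x, y2, y1} {x, w y1, y1} := nimMove_snd (lt_trans (hw y1 hy1).1 hl)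
      have : ({x, w y1, y1} : Multiset ℕ) = {x, y1, w y1} := ms_swap23 _ _ _
      rw [this] at hmv
      exact no_move_between hP2 hP1 hmv
    · omega
    · omega
  have himage : Tf ∪ Tf.image w ⊆ Finset.range x := by
    intro a ha
    rcases Finset.mem_union.1 ha with ha | ha
    · exact Finset.mem_range.2 (hTlt a ha)
    · obtain ⟨y2, hy2, hw2⟩ := Finset.mem_image.1 ha
      exact Finset.mem_range.2 (lt_trans (hw2 ▸ (hw y2 hy2).1) (hTlt y2 hy2))
  have hcard : Tf.card + (Tf.image w).card ≤ x := by
    rw [← Finset.card_union_of_disjoint hdisj]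
    simpa using Finset.card_le_card himage
  have := Finset.card_image_of_injOn hinj
  omega

lemma rdef_lt {F : Finset (Multiset ℕ)} {m Y X : ℕ}
    (hm : 2 * Fmax F + F.card < m) (hX : m ≤ X) (hr : rdef F m Y > X - m) : X < 2 * Y := by
  have hsub : {x' | m ≤ x' ∧ (x', Y) ∈ Sset F} ⊆ Set.Ico m (2 * Y) := by
    intro x' hx'
    obtain ⟨hm1, hS⟩ := hx'
    rcases (Sset_bound hS).2 with h | h
    · exact ⟨hm1, h⟩
    · omega
  have hle : rdef F m Y ≤ (Set.Ico m (2 * Y)).ncard := by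
    rw [rdef]
    exact Set.ncard_le_ncard hsub (Set.finite_Ico _ _)
  have hIco : (Set.Ico m (2 * Y)).ncard = 2 * Y - m := by
    rw [← Finset.coe_Ico, Set.ncard_coe_finset, Nat.card_Ico]
  omega

end CIS
namespace CIS

lemma Ubar_base {F : Finset (Multiset ℕ)} {x y : ℕ} {p : ℕ × ℕ} (h : p.2 < x) :
    Ubar F x y p ↔ p ∈ Uset F x y := by
  rw [Ubar]; simp [h]

lemma Ubar_high {F : Finset (Multiset ℕ)} {x y : ℕ} {p : ℕ × ℕ} (h : ¬ p.2 < x)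
    (hlt : p.2 < p.1) :
    Ubar F x y p ↔ (p.1 ≤ 2 * p.2 ∧ ¬ Ubar F x y (p.2, p.1 / 2)) := by
  rw [Ubar, if_neg h, dif_pos hlt]

lemma Ubar_not {F : Finset (Multiset ℕ)} {x y : ℕ} {p : ℕ × ℕ} (h : ¬ p.2 < x)
    (hge : ¬ p.2 < p.1) : ¬ Ubar F x y p := by
  rw [Ubar, if_neg h, dif_neg hge]
  exact not_false

lemma Sn_lt {F : Finset (Multiset ℕ)} {n : ℕ} {p : ℕ × ℕ} (h : p ∈ Sn F n) : p.2 < p.1 := by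
  change Ubar F n 0 p at h
  by_cases hb : p.2 < n
  · rw [Ubar_base hb] at h
    rcases h with ⟨h1, _⟩ | ⟨_, h0, _⟩ | ⟨_, h1, h2, _⟩ | ⟨h0, _⟩
    · exact h1
    · omega
    · omega
    · omega
  · by_cases hlt : p.2 < p.1
    · exact hlt
    · exact absurd h (Ubar_not hb hlt)

lemma Sn_le2 {F : Finset (Multiset ℕ)} {n : ℕ} {p : ℕ × ℕ}
    (hm : 2 * Fmax F + F.card < n) (h : p ∈ Sn F n) : p.1 ≤ 2 * p.2 := by
  have hlt := Sn_lt h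
  change Ubar F n 0 p at h
  by_cases hb : p.2 < n
  · rw [Ubar_base hb] at h
    rcases h with ⟨h1, hxn, hbd⟩ | ⟨_, h0, _⟩ | ⟨_, h1, h2, hr⟩ | ⟨h0, _⟩
    · have := bdef_self_le F p.1
      omega
    · omega
    · have := rdef_lt hm h2 hr
      omega
    · omega
  · rw [Ubar_high hb hlt] at h
    exact h.1

lemma Sn_two_mem {F : Finset (Multiset ℕ)} {n : ℕ} (hn : 1 ≤ n) {y : ℕ} (hy : n ≤ y) :
    ((2 * y, y) : ℕ × ℕ) ∈ Sn F n := by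
  change Ubar F n 0 (2 * y, y)
  have hb : ¬ ((2 * y, y) : ℕ × ℕ).2 < n := by simp; omega
  have hlt : ((2 * y, y) : ℕ × ℕ).2 < ((2 * y, y) : ℕ × ℕ).1 := by simp; omega
  rw [Ubar_high hb hlt]
  refine ⟨le_rfl, ?_⟩
  have h2 : (2 * y) / 2 = y := by omega
  simp only [h2]
  exact Ubar_not (by simp; omega) (by simp)

/-- the seed: (2h, h) with h = (m+1)/2 is not in S_m -/
lemma Sn_seed_not {F : Finset (Multiset ℕ)} {m : ℕ}
    (hm : 2 * Fmax F + F.card < m) (hm2 : 2 ≤ m) :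
    ¬ Ubar F m 0 (2 * ((m + 1) / 2), (m + 1) / 2) := by
  set h : ℕ := (m + 1) / 2 with hh
  have hhm : h < m := by omega
  have hmh : m ≤ 2 * h := by omega
  rw [Ubar_base (show ((2 * h, h) : ℕ × ℕ).2 < m from hhm)]
  intro hU
  rcases hU with ⟨_, hle, hbd⟩ | ⟨_, h0, _⟩ | ⟨_, _, _, hr⟩ | ⟨h0, _⟩
  · -- A-case: 2h ≤ m so 2h = m; contradict improved column bound
    simp only at hle hbd
    have h2hm : 2 * h = m := by omega
    -- column m of S is inside Ico (m/2+1) m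
    have hsub : {y' | y' ≤ m ∧ (m, y') ∈ Sset F} ⊆ Set.Ico (m / 2 + 1) m := by
      intro y' hy'
      obtain ⟨_, hS⟩ := hy'
      obtain ⟨hyx, hor⟩ := Sset_bound hS
      rcases hor with h1 | h1
      · constructor <;> omega
      · omega
    have hb : bdef F m m ≤ m - m / 2 - 1 := by
      have hle2 : bdef F m m ≤ (Set.Ico (m / 2 + 1) m).ncard := by
        rw [bdef]
        exact Set.ncard_le_ncard hsub (Set.finite_Ico _ _)
      have : (Set.Ico (m / 2 + 1) m).ncard = m - (m / 2 + 1) := by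
        rw [← Finset.coe_Ico, Set.ncard_coe_finset, Nat.card_Ico]
      omega
    rw [h2hm] at hbd
    omega
  · omega
  · have := rdef_lt hm (by simpa using hmh) (by simpa using hr)
    omega
  · omega

/-- the doubling chain -/
def dseq (t0 : ℕ) : ℕ → ℕ
  | 0 => t0
  | (k + 1) => 2 * dseq t0 k + 1

lemma dseq_ge (t0 k : ℕ) : t0 + k ≤ dseq t0 k := by
  induction k with
  | zero => simp [dseq]
  | succ k ih => simp [dseq]; omega

lemma Sn_diag_chain {F : Finset (Multiset ℕ)} {m : ℕ}
    (hm : 2 * Fmax F + F.card < m) (hm2 : 2 ≤ m) :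
    ∀ k, m ≤ dseq (2 * ((m + 1) / 2)) k ∧
      ((dseq (2 * ((m + 1) / 2)) k + 1, dseq (2 * ((m + 1) / 2)) k) : ℕ × ℕ) ∈ Sn F m := by
  set t0 : ℕ := 2 * ((m + 1) / 2) with ht0
  intro k
  induction k with
  | zero =>
    have hge : m ≤ t0 := by omega
    refine ⟨by simpa [dseq] using hge, ?_⟩
    change Ubar F m 0 (t0 + 1, t0)
    have hb : ¬ ((t0 + 1, t0) : ℕ × ℕ).2 < m := by simp [dseq]; omega
    rw [Ubar_high hb (by simp [dseq])]
    constructor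
    · simp [dseq]; omega
    · have hdiv : (t0 + 1) / 2 = (m + 1) / 2 := by omega
      simp only [dseq, hdiv]
      exact Sn_seed_not hm hm2
  | succ k ih =>
    obtain ⟨hge, hmem⟩ := ih
    set t : ℕ := dseq t0 k with htdef
    refine ⟨by simp [dseq]; omega, ?_⟩
    change Ubar F m 0 (2 * t + 1 + 1, 2 * t + 1)
    have hb : ¬ ((2 * t + 1 + 1, 2 * t + 1) : ℕ × ℕ).2 < m := by simp; omega
    rw [Ubar_high hb (by simp)]
    constructor
    · simp
    · have hdiv : (2 * t + 1 + 1) / 2 = t + 1 := by omega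
      simp only [hdiv]
      intro hU
      have hb2 : ¬ ((2 * t + 1, t + 1) : ℕ × ℕ).2 < m := by simp; omega
      rw [Ubar_high hb2 (by simp; omega)] at hU
      have hdiv2 : (2 * t + 1) / 2 = t := by omega
      simp only [hdiv2] at hU
      exact hU.2 hmem

end CIS
namespace CIS

section Matching

variable (R : ℕ → ℕ → Prop)

/-- the next pair chosen by back-and-forth -/
noncomputable def nextPair (k : ℕ) (L : List (ℕ × ℕ)) : ℕ × ℕ :=
  if k % 2 = 0 then
    (sInf {a | a ∉ L.map Prod.fst},
     sInf {b | R (sInf {a | a ∉ L.map Prod.fst}) b ∧ b ∉ L.map Prod.snd})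
  else
    (sInf {a | R a (sInf {b | b ∉ L.map Prod.snd}) ∧ a ∉ L.map Prod.fst},
     sInf {b | b ∉ L.map Prod.snd})

noncomputable def hist : ℕ → List (ℕ × ℕ)
  | 0 => []
  | (k + 1) => hist k ++ [nextPair R k (hist k)]

variable {R}
variable (ha : ∀ a, {b | R a b}.Infinite) (hb : ∀ b, {a | R a b}.Infinite)

lemma missF_ne (L : List (ℕ × ℕ)) : {a | a ∉ L.map Prod.fst}.Nonempty := by
  have : {a : ℕ | a ∈ L.map Prod.fst}.Finite := L.map Prod.fst |>.finite_toSet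
  have := this.infinite_compl
  exact this.nonempty

lemma missS_ne (L : List (ℕ × ℕ)) : {b | b ∉ L.map Prod.snd}.Nonempty := by
  have : {b : ℕ | b ∈ L.map Prod.snd}.Finite := L.map Prod.snd |>.finite_toSet
  exact this.infinite_compl.nonempty

include ha in
lemma candB_ne (a : ℕ) (L : List (ℕ × ℕ)) : {b | R a b ∧ b ∉ L.map Prod.snd}.Nonempty := by
  have hfin : {b : ℕ | b ∈ L.map Prod.snd}.Finite := L.map Prod.snd |>.finite_toSet
  have := (ha a).diff hfin
  obtain ⟨b, hb1, hb2⟩ := this.nonempty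
  exact ⟨b, hb1, hb2⟩

include hb in
lemma candA_ne (b : ℕ) (L : List (ℕ × ℕ)) : {a | R a b ∧ a ∉ L.map Prod.fst}.Nonempty := by
  have hfin : {a : ℕ | a ∈ L.map Prod.fst}.Finite := L.map Prod.fst |>.finite_toSet
  obtain ⟨a, ha1, ha2⟩ := ((hb b).diff hfin).nonempty
  exact ⟨a, ha1, ha2⟩

include ha hb in
lemma nextPair_spec (k : ℕ) (L : List (ℕ × ℕ)) :
    R (nextPair R k L).1 (nextPair R k L).2 ∧
    (nextPair R k L).1 ∉ L.map Prod.fst ∧ (nextPair R k L).2 ∉ L.map Prod.snd := by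
  by_cases he : k % 2 = 0
  · rw [nextPair, if_pos he]
    have h1 := Nat.sInf_mem (missF_ne L)
    have h2 := Nat.sInf_mem (candB_ne ha (sInf {a | a ∉ L.map Prod.fst}) L)
    exact ⟨h2.1, h1, h2.2⟩
  · rw [nextPair, if_neg he]
    have h1 := Nat.sInf_mem (missS_ne L)
    have h2 := Nat.sInf_mem (candA_ne hb (sInf {b | b ∉ L.map Prod.snd}) L)
    exact ⟨h2.1, h2.2, h1⟩

include ha hb in
lemma hist_inv (k : ℕ) :
    ((hist R k).map Prod.fst).Nodup ∧ ((hist R k).map Prod.snd).Nodup ∧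
    ∀ p ∈ hist R k, R p.1 p.2 := by
  induction k with
  | zero => simp [hist]
  | succ k ih =>
    obtain ⟨i1, i2, i3⟩ := ih
    obtain ⟨s1, s2, s3⟩ := nextPair_spec ha hb k (hist R k)
    refine ⟨?_, ?_, ?_⟩
    · rw [hist, List.map_append, List.nodup_append]
      refine ⟨i1, by simp, ?_⟩
      simp only [List.map_cons, List.map_nil, List.disjoint_singleton]
      simp at s2 ⊢
      intro a x hx heq; subst heq; exact s2 x hx
    · rw [hist, List.map_append, List.nodup_append]
      refine ⟨i2, by simp, ?_⟩
      simp only [List.map_cons, List.map_nil, List.disjoint_singleton]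
      simp at s3 ⊢
      intro a x hx heq; subst heq; exact s3 x hx
    · intro p hp
      rw [hist, List.mem_append] at hp
      rcases hp with hp | hp
      · exact i3 p hp
      · simp only [List.mem_singleton] at hp
        rw [hp]
        exact s1

lemma hist_mono {k j : ℕ} (h : k ≤ j) {p : ℕ × ℕ} (hp : p ∈ hist R k) : p ∈ hist R j := by
  induction j with
  | zero =>
    rw [Nat.le_zero.1 h] at hp
    exact hp
  | succ j ih =>
    rcases Nat.lt_or_ge k (j + 1) with hlt | hge
    · rw [hist, List.mem_append]
      exact Or.inl (ih (by omega))
    · have hkj : k = j + 1 := by omega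
      rwa [← hkj]

end Matching

end CIS
namespace CIS

section Matching2

variable {R : ℕ → ℕ → Prop}

noncomputable def muF (R : ℕ → ℕ → Prop) (k : ℕ) : ℕ :=
  sInf {a | a ∉ (hist R k).map Prod.fst}

noncomputable def muS (R : ℕ → ℕ → Prop) (k : ℕ) : ℕ :=
  sInf {b | b ∉ (hist R k).map Prod.snd}

lemma map_fst_succ_sub (k : ℕ) :
    {a | a ∉ (hist R (k + 1)).map Prod.fst} ⊆ {a | a ∉ (hist R k).map Prod.fst} := by
  intro a hain hmem
  apply hain
  rw [hist, List.map_append, List.mem_append]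
  exact Or.inl hmem

lemma map_snd_succ_sub (k : ℕ) :
    {b | b ∉ (hist R (k + 1)).map Prod.snd} ⊆ {b | b ∉ (hist R k).map Prod.snd} := by
  intro b hbin hmem
  apply hbin
  rw [hist, List.map_append, List.mem_append]
  exact Or.inl hmem

lemma muF_mono (k : ℕ) : muF R k ≤ muF R (k + 1) :=
  Nat.sInf_le (map_fst_succ_sub k (Nat.sInf_mem (missF_ne _)))

lemma muS_mono (k : ℕ) : muS R k ≤ muS R (k + 1) :=
  Nat.sInf_le (map_snd_succ_sub k (Nat.sInf_mem (missS_ne _)))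

lemma muF_strict (k : ℕ) (he : k % 2 = 0) : muF R k < muF R (k + 1) := by
  have hmem : muF R k ∈ (hist R (k + 1)).map Prod.fst := by
    rw [hist, List.map_append, List.mem_append]
    right
    simp only [List.map_cons, List.map_nil, List.mem_singleton]
    rw [nextPair, if_pos he]
    rfl
  have hne : muF R (k + 1) ≠ muF R k := by
    intro heq
    have h2 : muF R (k + 1) ∈ {a | a ∉ (hist R (k + 1)).map Prod.fst} :=
      Nat.sInf_mem (missF_ne (hist R (k + 1)))
    rw [heq] at h2
    exact h2 hmem
  have := muF_mono (R := R) k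
  omega

lemma muS_strict (k : ℕ) (ho : k % 2 = 1) : muS R k < muS R (k + 1) := by
  have hmem : muS R k ∈ (hist R (k + 1)).map Prod.snd := by
    rw [hist, List.map_append, List.mem_append]
    right
    simp only [List.map_cons, List.map_nil, List.mem_singleton]
    rw [nextPair, if_neg (by omega)]
    rfl
  have hne : muS R (k + 1) ≠ muS R k := by
    intro heq
    have h2 : muS R (k + 1) ∈ {b | b ∉ (hist R (k + 1)).map Prod.snd} :=
      Nat.sInf_mem (missS_ne (hist R (k + 1)))
    rw [heq] at h2
    exact h2 hmem
  have := muS_mono (R := R) k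
  omega

lemma muF_ge (j : ℕ) : j ≤ muF R (2 * j) := by
  induction j with
  | zero => omega
  | succ j ih =>
    have h1 : muF R (2 * j) < muF R (2 * j + 1) := muF_strict _ (by omega)
    have h2 : muF R (2 * j + 1) ≤ muF R (2 * j + 2) := muF_mono _
    have heq : 2 * (j + 1) = 2 * j + 2 := by omega
    rw [heq]
    omega

lemma muS_ge (j : ℕ) : j ≤ muS R (2 * j + 1) := by
  induction j with
  | zero => omega
  | succ j ih =>
    have h1 : muS R (2 * j + 1) < muS R (2 * j + 2) := muS_strict _ (by omega)
    have h2 : muS R (2 * j + 2) ≤ muS R (2 * j + 3) := muS_mono _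
    have heq : 2 * (j + 1) + 1 = 2 * j + 3 := by omega
    rw [heq]
    omega

lemma coverage_a (a : ℕ) : a ∈ (hist R (2 * (a + 1))).map Prod.fst := by
  by_contra hc
  have h1 : muF R (2 * (a + 1)) ≤ a := Nat.sInf_le hc
  have h2 := muF_ge (R := R) (a + 1)
  omega

lemma coverage_b (b : ℕ) : b ∈ (hist R (2 * (b + 1) + 1)).map Prod.snd := by
  by_contra hc
  have h1 : muS R (2 * (b + 1) + 1) ≤ b := Nat.sInf_le hc
  have h2 := muS_ge (R := R) (b + 1)
  omega

lemma eq_of_nodup_fst {L : List (ℕ × ℕ)} (h : (L.map Prod.fst).Nodup) {a b c : ℕ}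
    (h1 : (a, b) ∈ L) (h2 : (a, c) ∈ L) : b = c := by
  induction L with
  | nil => simp at h1
  | cons d t ih =>
    rw [List.map_cons, List.nodup_cons] at h
    rcases List.mem_cons.1 h1 with he1 | ht1 <;> rcases List.mem_cons.1 h2 with he2 | ht2
    · rw [← he1] at he2
      exact (Prod.mk.injEq _ _ _ _ ▸ he2).2.symm
    · exfalso
      apply h.1
      rw [← he1]
      exact List.mem_map.2 ⟨(a, c), ht2, rfl⟩
    · exfalso
      apply h.1
      rw [← he2]
      exact List.mem_map.2 ⟨(a, b), ht1, rfl⟩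
    · exact ih h.2 ht1 ht2

lemma eq_of_nodup_snd {L : List (ℕ × ℕ)} (h : (L.map Prod.snd).Nodup) {a b c : ℕ}
    (h1 : (b, a) ∈ L) (h2 : (c, a) ∈ L) : b = c := by
  induction L with
  | nil => simp at h1
  | cons d t ih =>
    rw [List.map_cons, List.nodup_cons] at h
    rcases List.mem_cons.1 h1 with he1 | ht1 <;> rcases List.mem_cons.1 h2 with he2 | ht2
    · rw [← he1] at he2
      exact (Prod.mk.injEq _ _ _ _ ▸ he2).1.symm
    · exfalso
      apply h.1
      rw [← he1]
      exact List.mem_map.2 ⟨(c, a), ht2, rfl⟩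
    · exfalso
      apply h.1
      rw [← he2]
      exact List.mem_map.2 ⟨(b, a), ht1, rfl⟩
    · exact ih h.2 ht1 ht2

theorem matching_nat (ha : ∀ a, {b | R a b}.Infinite) (hb : ∀ b, {a | R a b}.Infinite) :
    ∃ φ : ℕ → ℕ, Function.Bijective φ ∧ ∀ a, R a (φ a) := by
  have hex : ∀ a : ℕ, ∃ b, ∃ k, (a, b) ∈ hist R k := by
    intro a
    obtain ⟨p, hp, hfst⟩ := List.mem_map.1 (coverage_a (R := R) a)
    exact ⟨p.2, 2 * (a + 1), by rwa [show (a, p.2) = p from Prod.ext hfst.symm rfl]⟩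
  choose φ hφ using hex
  have uniq_fst : ∀ {a b c k1 k2}, (a, b) ∈ hist R k1 → (a, c) ∈ hist R k2 → b = c := by
    intro a b c k1 k2 h1 h2
    have h1' := hist_mono (le_max_left k1 k2) h1
    have h2' := hist_mono (le_max_right k1 k2) h2
    exact eq_of_nodup_fst (hist_inv ha hb (max k1 k2)).1 h1' h2'
  have uniq_snd : ∀ {a b c k1 k2}, (b, a) ∈ hist R k1 → (c, a) ∈ hist R k2 → b = c := by
    intro a b c k1 k2 h1 h2
    have h1' := hist_mono (le_max_left k1 k2) h1
    have h2' := hist_mono (le_max_right k1 k2) h2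
    exact eq_of_nodup_snd (hist_inv ha hb (max k1 k2)).2.1 h1' h2'
  refine ⟨φ, ⟨?_, ?_⟩, ?_⟩
  · intro a1 a2 heq
    obtain ⟨k1, h1⟩ := hφ a1
    obtain ⟨k2, h2⟩ := hφ a2
    rw [heq] at h1
    exact uniq_snd h1 h2
  · intro b
    obtain ⟨p, hp, hsnd⟩ := List.mem_map.1 (coverage_b (R := R) b)
    obtain ⟨k, hk⟩ := hφ p.1
    refine ⟨p.1, ?_⟩
    have hpmem : (p.1, b) ∈ hist R (2 * (b + 1) + 1) := by
      rwa [show (p.1, b) = p from Prod.ext rfl hsnd.symm]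
    exact uniq_fst hk hpmem
  · intro a
    obtain ⟨k, hk⟩ := hφ a
    exact (hist_inv ha hb k).2.2 _ hk

end Matching2

end CIS
namespace CIS

lemma dseq_strictMono {t0 : ℕ} (ht : 1 ≤ t0) : StrictMono (dseq t0) := by
  apply strictMono_nat_of_lt_succ
  intro k
  have := dseq_ge t0 k
  show dseq t0 k < 2 * dseq t0 k + 1
  omega

end CIS

/-- For m > n > 4·F_max + 3·|F| there is a bijection φ : S_n → S_m with
x₁ − y₁ ≥ x₂ − y₂ and x₁ − 2y₁ ≥ x₂ − 2y₂ whenever φ(x₁,y₁) = (x₂,y₂). -/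
theorem Sn_bijection (F : Finset (Multiset ℕ)) (n m : ℕ)
    (hn : n > 4 * Fmax F + 3 * F.card) (hm : m > n) :
    ∃ φ : Sn F n → Sn F m, Function.Bijective φ ∧
      ∀ p : Sn F n,
        ((φ p : ℕ × ℕ).1 : ℤ) - ((φ p : ℕ × ℕ).2 : ℤ) ≤
          ((p : ℕ × ℕ).1 : ℤ) - ((p : ℕ × ℕ).2 : ℤ) ∧
        ((φ p : ℕ × ℕ).1 : ℤ) - 2 * ((φ p : ℕ × ℕ).2 : ℤ) ≤
          ((p : ℕ × ℕ).1 : ℤ) - 2 * ((p : ℕ × ℕ).2 : ℤ) := by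
  classical
  have hKn : 2 * Fmax F + F.card < n := by omega
  have hKm : 2 * Fmax F + F.card < m := by omega
  have hn1 : 1 ≤ n := by omega
  have hm2 : 2 ≤ m := by omega
  -- infinite subtype instances
  have hInfA : (Sn F n).Infinite := by
    apply Set.infinite_of_injective_forall_mem
      (f := fun k : ℕ => ((2 * (n + k), n + k) : ℕ × ℕ))
    · intro k1 k2 heq
      have := congrArg Prod.snd heq
      simpa using this
    · intro k
      exact CIS.Sn_two_mem hn1 (by omega)
  have hInfB : (Sn F m).Infinite := by
    apply Set.infinite_of_injective_forall_mem
      (f := fun k : ℕ => ((2 * (m + k), m + k) : ℕ × ℕ))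
    · intro k1 k2 heq
      have := congrArg Prod.snd heq
      simpa using this
    · intro k
      exact CIS.Sn_two_mem (by omega) (by omega)
  haveI iA : Infinite ↥(Sn F n) := hInfA.to_subtype
  haveI iB : Infinite ↥(Sn F m) := hInfB.to_subtype
  obtain ⟨dA⟩ := nonempty_denumerable ↥(Sn F n)
  obtain ⟨dB⟩ := nonempty_denumerable ↥(Sn F m)
  haveI := dA
  haveI := dB
  let eA : ℕ ≃ ↥(Sn F n) := (Denumerable.eqv ↥(Sn F n)).symm
  let eB : ℕ ≃ ↥(Sn F m) := (Denumerable.eqv ↥(Sn F m)).symm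
  set R : ℕ → ℕ → Prop := fun i j =>
    (((eB j : ℕ × ℕ).1 : ℤ) - ((eB j : ℕ × ℕ).2 : ℤ) ≤
      ((eA i : ℕ × ℕ).1 : ℤ) - ((eA i : ℕ × ℕ).2 : ℤ)) ∧
    (((eB j : ℕ × ℕ).1 : ℤ) - 2 * ((eB j : ℕ × ℕ).2 : ℤ) ≤
      ((eA i : ℕ × ℕ).1 : ℤ) - 2 * ((eA i : ℕ × ℕ).2 : ℤ)) with hR
  set t0 : ℕ := 2 * ((m + 1) / 2) with ht0
  have ht01 : 1 ≤ t0 := by omega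
  have ha : ∀ i, {j | R i j}.Infinite := by
    intro i
    have hlt : ((eA i : ℕ × ℕ)).2 < ((eA i : ℕ × ℕ)).1 := CIS.Sn_lt (eA i).2
    set k0 : ℕ := 2 * ((eA i : ℕ × ℕ)).2 + 1 with hk0
    apply Set.infinite_of_injective_forall_mem
      (f := fun k : ℕ => eB.symm ⟨(CIS.dseq t0 (k + k0) + 1, CIS.dseq t0 (k + k0)),
        (CIS.Sn_diag_chain hKm hm2 (k + k0)).2⟩)
    · intro k1 k2 heq
      have h2 := congrArg (fun q => ((eB q : ℕ × ℕ)).2) heq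
      simp only [Equiv.apply_symm_apply] at h2
      have h3 := (CIS.dseq_strictMono ht01).injective h2
      omega
    · intro k
      simp only [Set.mem_setOf_eq, hR, Equiv.apply_symm_apply]
      have hge := CIS.dseq_ge t0 (k + k0)
      constructor
      · push_cast
        omega
      · push_cast
        omega
  have hb : ∀ j, {i | R i j}.Infinite := by
    intro j
    have hle2 : ((eB j : ℕ × ℕ)).1 ≤ 2 * ((eB j : ℕ × ℕ)).2 := CIS.Sn_le2 hKm (eB j).2
    have hlt2 : ((eB j : ℕ × ℕ)).2 < ((eB j : ℕ × ℕ)).1 := CIS.Sn_lt (eB j).2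
    set y0 : ℕ := n + ((eB j : ℕ × ℕ)).1 with hy0
    apply Set.infinite_of_injective_forall_mem
      (f := fun k : ℕ => eA.symm ⟨((2 * (y0 + k), y0 + k) : ℕ × ℕ),
        CIS.Sn_two_mem hn1 (by omega)⟩)
    · intro k1 k2 heq
      have h2 := congrArg (fun q => ((eA q : ℕ × ℕ)).2) heq
      simp only [Equiv.apply_symm_apply] at h2
      simpa using h2
    · intro k
      simp only [Set.mem_setOf_eq, hR, Equiv.apply_symm_apply]
      constructor
      · push_cast
        omega
      · push_cast
        omega
  obtain ⟨ψ, hbij, hRψ⟩ := CIS.matching_nat ha hb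
  refine ⟨fun a => eB (ψ (eA.symm a)), ?_, ?_⟩
  · exact eB.bijective.comp (hbij.comp eA.symm.bijective)
  · intro p
    have := hRψ (eA.symm p)
    rw [hR] at this
    simpa using this
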